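/- (Timed Gromov Compactness) If (X_j, d_j, τ_j) is a sequence of compact timed metric spaces with diam(X_j) ≤ D, uniformly totally bounded (for every R ∈ (0,D] there is N(R) such that each X_j is covered by N(R) balls of radius R), and τ_j : X_j → [0, τ_max] Lipschitz-1, then a subsequence converges in the intrinsic timed Hausdorff sense to a compact timed metric space (X̄_∞, d_∞, τ_∞): there exist distance and time preserving timed-Fréchet maps φ_j : X_j → [0,τ_max] × Z ⊂ ℓ^∞ with Z compact, such that d_H(φ_j(X_j), φ_∞(X̄_∞)) → 0. -/

import Mathlib

open Filter

open Metric Set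

noncomputable section

namespace TGC

variable {Y : Type*} [MetricSpace Y]

def timedCoords (f : Y → ℝ) (s : ℕ → Y) (x : Y) : ℕ → ℝ :=
  fun n => Nat.casesOn n (f x) fun m => dist (s m) x

theorem memℓp_timedCoords (f : Y → ℝ) (s : ℕ → Y) (x : Y) (B : ℝ)
    (hf : |f x| ≤ B) (hs : ∀ m, dist (s m) x ≤ B) :
    Memℓp (timedCoords f s x) ⊤ := by
  apply memℓp_infty
  refine ⟨B, ?_⟩
  rintro r ⟨n, rfl⟩
  cases n with
  | zero => simpa [timedCoords] using hf
  | succ m => simpa [timedCoords, abs_of_nonneg dist_nonneg] using hs m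

def frechetMap (f : Y → ℝ) (s : ℕ → Y) (h : ∀ x, Memℓp (timedCoords f s x) ⊤) (x : Y) :
    lp (fun _ : ℕ => ℝ) ⊤ := ⟨timedCoords f s x, h x⟩

theorem frechetMap_coe (f : Y → ℝ) (s : ℕ → Y) (h) (x : Y) :
    (frechetMap f s h x : ∀ _ : ℕ, ℝ) = timedCoords f s x := rfl

theorem frechetMap_dist_le {Z : Type*} [MetricSpace Z]
    (f : Y → ℝ) (s : ℕ → Y) (h : ∀ x, Memℓp (timedCoords f s x) ⊤)
    (f' : Z → ℝ) (s' : ℕ → Z) (h' : ∀ x, Memℓp (timedCoords f' s' x) ⊤) (x : Y) (y : Z)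
    {C : ℝ} (hC : 0 ≤ C) (h0 : |f x - f' y| ≤ C)
    (hm : ∀ m, |dist (s m) x - dist (s' m) y| ≤ C) :
    dist (frechetMap f s h x) (frechetMap f' s' h' y) ≤ C := by
  rw [dist_eq_norm]
  refine lp.norm_le_of_forall_le hC fun i => ?_
  have hsub : ((frechetMap f s h x - frechetMap f' s' h' y : lp (fun _ : ℕ => ℝ) ⊤) : ∀ _ : ℕ, ℝ) i
      = timedCoords f s x i - timedCoords f' s' y i := by
    rw [lp.coeFn_sub]; rfl
  rw [Real.norm_eq_abs, hsub]
  cases i with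
  | zero => exact h0
  | succ m => exact hm m

theorem coord_le_dist {Z : Type*} [MetricSpace Z]
    (f : Y → ℝ) (s : ℕ → Y) (h : ∀ x, Memℓp (timedCoords f s x) ⊤)
    (f' : Z → ℝ) (s' : ℕ → Z) (h' : ∀ x, Memℓp (timedCoords f' s' x) ⊤) (x : Y) (y : Z)
    (i : ℕ) :
    |timedCoords f s x i - timedCoords f' s' y i|
      ≤ dist (frechetMap f s h x) (frechetMap f' s' h' y) := by
  rw [dist_eq_norm]
  have hsub : ((frechetMap f s h x - frechetMap f' s' h' y : lp (fun _ : ℕ => ℝ) ⊤) : ∀ _ : ℕ, ℝ) i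
      = timedCoords f s x i - timedCoords f' s' y i := by
    rw [lp.coeFn_sub]; rfl
  calc |timedCoords f s x i - timedCoords f' s' y i|
      = ‖((frechetMap f s h x - frechetMap f' s' h' y : lp (fun _ : ℕ => ℝ) ⊤) : ∀ _ : ℕ, ℝ) i‖ := by
        rw [hsub, Real.norm_eq_abs]
    _ ≤ _ := lp.norm_apply_le_norm ENNReal.top_ne_zero _ i

theorem isometry_frechetMap (f : Y → ℝ) (s : ℕ → Y) (h : ∀ x, Memℓp (timedCoords f s x) ⊤)
    (hs : DenseRange s) (hf : ∀ x y, |f x - f y| ≤ dist x y) :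
    Isometry (frechetMap f s h) := by
  refine Isometry.of_dist_eq fun x y => le_antisymm ?_ ?_
  · exact frechetMap_dist_le f s h f s h x y dist_nonneg (hf x y)
      fun m => by simpa [dist_comm] using abs_dist_sub_le x y (s m)
  · refine le_of_forall_pos_le_add fun ε hε => ?_
    obtain ⟨m, hmx⟩ := (Metric.denseRange_iff.1 hs) x (ε / 2) (by linarith)
    have hc := coord_le_dist f s h f s h x y (m + 1)
    have hc' : |dist (s m) x - dist (s m) y| ≤ dist (frechetMap f s h x) (frechetMap f s h y) := hc
    have h1 : dist x y ≤ dist x (s m) + dist (s m) y := dist_triangle _ _ _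
    have h2 : dist (s m) y - dist (s m) x ≤ |dist (s m) x - dist (s m) y| := by
      rw [abs_sub_comm]; exact le_abs_self _
    have h4 : dist (s m) x = dist x (s m) := dist_comm _ _
    linarith [hc', h1, h2, hmx, h4]



structure PrePt where n : ℕ

def preMS (d : ℕ → ℕ → ℝ) (h0 : ∀ n, d n n = 0) (hsymm : ∀ m n, d m n = d n m)
    (htri : ∀ m n p, d m p ≤ d m n + d n p) : PseudoMetricSpace PrePt where
  dist x y := d x.n y.n
  dist_self x := h0 x.n
  dist_comm x y := hsymm x.n y.n
  dist_triangle x y z := htri x.n y.n z.n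

end TGC
end


/-- Timed Gromov Compactness: If `(X j, d j, τ j)` is a sequence of
compact timed metric spaces with `diam (X j) ≤ D`, uniformly totally bounded (for
every `R ∈ (0,D]` there is `N R` such that each `X j` is covered by `N R` balls of
radius `R`), and `τ j : X j → [0, τmax]` Lipschitz-1, then a subsequence converges in
the intrinsic timed Hausdorff sense to a compact timed metric space
`(X∞, d∞, τ∞)`: there exist distance and time preserving timed-Fréchet maps
`φ k : X (g k) → [0,τmax] × Z ⊂ ℓ^∞` (coordinate `0` equal to the time, later
coordinates the distances to a countable dense set) with `Z ⊂ ℓ^∞` compact containing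
all images, such that `d_H(φ k (X (g k)), φ∞ (X∞)) → 0`. -/
theorem timed_gromov_compactness
    (X : ℕ → Type) [∀ j, MetricSpace (X j)] [∀ j, CompactSpace (X j)]
    [∀ j, Nonempty (X j)]
    (D : ℝ) (hD : ∀ j, Metric.diam (Set.univ : Set (X j)) ≤ D)
    (τmax : ℝ) (τ : ∀ j, X j → ℝ)
    (hτrange : ∀ j x, τ j x ∈ Set.Icc (0 : ℝ) τmax)
    (hτlip : ∀ j (x y : X j), |τ j x - τ j y| ≤ dist x y)
    (N : ℝ → ℕ)
    (hN : ∀ R ∈ Set.Ioc (0 : ℝ) D, ∀ j, ∃ c : Fin (N R) → X j,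
      ∀ x : X j, ∃ m, dist x (c m) < R) :
    ∃ g : ℕ → ℕ, StrictMono g ∧
    ∃ (Xinf : Type) (mXinf : MetricSpace Xinf),
      CompactSpace Xinf ∧ Nonempty Xinf ∧
      ∃ τinf : Xinf → ℝ,
        (∀ x, τinf x ∈ Set.Icc (0 : ℝ) τmax) ∧
        (∀ x y : Xinf, |τinf x - τinf y| ≤ dist x y) ∧
        ∃ Z : Set (lp (fun _ : ℕ => ℝ) ⊤), IsCompact Z ∧
        ∃ (φ : ∀ k : ℕ, X (g k) → lp (fun _ : ℕ => ℝ) ⊤)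
          (φinf : Xinf → lp (fun _ : ℕ => ℝ) ⊤),
          (∀ k, ∃ s : ℕ → X (g k), DenseRange s ∧ ∀ x : X (g k),
            ((φ k x : ∀ _ : ℕ, ℝ) 0 = τ (g k) x ∧
              ∀ n : ℕ, (φ k x : ∀ _ : ℕ, ℝ) (n + 1) = dist (s n) x)) ∧
          (∃ s : ℕ → Xinf, DenseRange s ∧ ∀ x : Xinf,
            ((φinf x : ∀ _ : ℕ, ℝ) 0 = τinf x ∧
              ∀ n : ℕ, (φinf x : ∀ _ : ℕ, ℝ) (n + 1) = dist (s n) x)) ∧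
          (∀ k, Isometry (φ k)) ∧ Isometry φinf ∧
          (∀ k, Set.range (φ k) ⊆ Z) ∧ Set.range φinf ⊆ Z ∧
          Tendsto (fun k => Metric.hausdorffDist (Set.range (φ k)) (Set.range φinf))
            atTop (nhds 0) := by
  classical
  have hD0 : (0:ℝ) ≤ D := le_trans Metric.diam_nonneg (hD 0)
  have hτmax0 : (0:ℝ) ≤ τmax :=
    le_trans (hτrange 0 (Classical.arbitrary _)).1 (hτrange 0 (Classical.arbitrary _)).2
  set η : ℕ → ℝ := fun l => 1 / ((l:ℝ) + 1) with hηdef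
  have hη : ∀ l, 0 < η l := fun l => by positivity
  -- uniform nets of prescribed size
  have hMex : ∀ l : ℕ, ∃ M : ℕ, ∀ j, ∃ c : Fin M → X j, ∀ x, ∃ i, dist x (c i) < η l := by
    intro l
    by_cases hcase : η l ≤ D
    · exact ⟨N (η l), fun j => hN (η l) ⟨hη l, hcase⟩ j⟩
    · refine ⟨1, fun j => ⟨fun _ => Classical.arbitrary (X j), fun x => ⟨0, ?_⟩⟩⟩
      calc dist x (Classical.arbitrary (X j)) ≤ Metric.diam (Set.univ : Set (X j)) :=
            Metric.dist_le_diam_of_mem isCompact_univ.isBounded trivial trivial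
        _ ≤ D := hD j
        _ < η l := not_le.1 hcase
  choose M hM using hMex
  choose C hC0 using hM
  have hMpos : ∀ l, 0 < M l := fun l => by
    obtain ⟨i, -⟩ := hC0 l 0 (Classical.arbitrary _)
    exact i.pos
  set C' : ∀ _ : ℕ, ∀ j, ℕ → X j := fun l j i => C l j ⟨i % M l, Nat.mod_lt _ (hMpos l)⟩
    with hC'def
  have hC' : ∀ l j (x : X j), ∃ i, i < M l ∧ dist x (C' l j i) < η l := by
    intro l j x
    obtain ⟨i, hi⟩ := hC0 l j x
    refine ⟨i.1, i.2, ?_⟩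
    have h2 : C' l j i.1 = C l j i := by
      have he : (⟨i.1 % M l, Nat.mod_lt _ (hMpos l)⟩ : Fin (M l)) = i :=
        Fin.ext (Nat.mod_eq_of_lt i.2)
      show C l j ⟨i.1 % M l, Nat.mod_lt _ (hMpos l)⟩ = C l j i
      rw [he]
    rwa [h2]
  set t : ∀ j, ℕ → X j := fun j p => C' p.unpair.1 j p.unpair.2 with htdef
  have htpair : ∀ l (i : ℕ) j, t j (Nat.pair l i) = C' l j i := by
    intro l i j; rw [htdef]; simp
  have gridnet : ∀ l j (x : X j), ∃ i, i < M l ∧ dist x (t j (Nat.pair l i)) < η l := by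
    intro l j x
    obtain ⟨i, hiM, hid⟩ := hC' l j x
    exact ⟨i, hiM, by rwa [htpair]⟩
  have hdistD : ∀ j (x y : X j), dist x y ≤ D := fun j x y =>
    le_trans (Metric.dist_le_diam_of_mem isCompact_univ.isBounded trivial trivial) (hD j)
  -- extraction of a convergent subsequence of all data
  set B₀ : ℝ := max τmax D with hB₀
  set F : ℕ → ℕ → ℕ → ℝ := fun j m n =>
    Nat.casesOn m (τ j (t j n)) (fun m' => dist (t j m') (t j n)) with hFdef
  have hFmem : ∀ j m n, F j m n ∈ Set.Icc (0:ℝ) B₀ := by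
    intro j m n
    cases m with
    | zero => exact ⟨(hτrange j _).1, le_trans (hτrange j _).2 (le_max_left _ _)⟩
    | succ m' => exact ⟨dist_nonneg, le_trans (hdistD j _ _) (le_max_right _ _)⟩
  have hcpt : IsCompact ((Set.univ : Set ℕ).pi fun _ =>
      (Set.univ : Set ℕ).pi fun _ => Set.Icc (0:ℝ) B₀) :=
    isCompact_univ_pi fun _ => isCompact_univ_pi fun _ => isCompact_Icc
  obtain ⟨L, -, g, hg, hconv0⟩ := hcpt.tendsto_subseq (x := F)
    (fun j => by simp only [Set.mem_univ_pi]; exact fun m n => hFmem j m n)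
  have hconv : ∀ m n, Tendsto (fun k => F (g k) m n) atTop (nhds (L m n)) := fun m n =>
    tendsto_pi_nhds.1 (tendsto_pi_nhds.1 hconv0 m) n
  set ℓ : ℕ → ℕ → ℝ := fun m n => L (m+1) n with hℓdef
  set Lτ : ℕ → ℝ := fun n => L 0 n with hLτdef
  have hconvd : ∀ m n, Tendsto (fun k => dist (t (g k) m) (t (g k) n)) atTop (nhds (ℓ m n)) :=
    fun m n => hconv (m+1) n
  have hconvτ : ∀ n, Tendsto (fun k => τ (g k) (t (g k) n)) atTop (nhds (Lτ n)) :=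
    fun n => hconv 0 n
  have hℓ0 : ∀ n, ℓ n n = 0 := fun n =>
    tendsto_nhds_unique (hconvd n n)
      (Filter.Tendsto.congr (fun k => (dist_self (t (g k) n)).symm) tendsto_const_nhds)
  have hℓsymm : ∀ m n, ℓ m n = ℓ n m := fun m n =>
    tendsto_nhds_unique ((hconvd m n).congr fun k => dist_comm _ _) (hconvd n m)
  have hℓtri : ∀ m n p, ℓ m p ≤ ℓ m n + ℓ n p := fun m n p =>
    le_of_tendsto_of_tendsto' (hconvd m p) ((hconvd m n).add (hconvd n p))
      (fun k => dist_triangle _ _ _)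
  have hℓnonneg : ∀ m n, 0 ≤ ℓ m n := fun m n =>
    le_of_tendsto_of_tendsto' tendsto_const_nhds (hconvd m n) (fun k => dist_nonneg)
  have hℓD : ∀ m n, ℓ m n ≤ D := fun m n =>
    le_of_tendsto (hconvd m n) (Filter.Eventually.of_forall fun k => hdistD _ _ _)
  have hℓabs : ∀ a b c, |ℓ a c - ℓ b c| ≤ ℓ a b := by
    intro a b c
    rw [abs_sub_le_iff]
    constructor
    · have := hℓtri a b c; linarith
    · have h1 := hℓtri b a c; have h2 := hℓsymm b a; linarith
  have hLτlip : ∀ m n, |Lτ m - Lτ n| ≤ ℓ m n := fun m n =>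
    le_of_tendsto_of_tendsto' (((hconvτ m).sub (hconvτ n)).abs) (hconvd m n)
      (fun k => hτlip _ _ _)
  have hLτmem : ∀ n, Lτ n ∈ Set.Icc (0:ℝ) τmax := fun n =>
    ⟨le_of_tendsto_of_tendsto' tendsto_const_nhds (hconvτ n) (fun k => (hτrange _ _).1),
     le_of_tendsto (hconvτ n) (Filter.Eventually.of_forall fun k => (hτrange _ _).2)⟩
  -- net density in the limit
  have NL : ∀ l v, ∃ i, i < M l ∧ ℓ v (Nat.pair l i) ≤ η l := by
    intro l v
    have hch : ∀ k, ∃ i : Fin (M l),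
        dist (t (g k) v) (t (g k) (Nat.pair l i.1)) < η l := by
      intro k
      obtain ⟨i, hiM, hid⟩ := gridnet l (g k) (t (g k) v)
      exact ⟨⟨i, hiM⟩, hid⟩
    choose f hf using hch
    obtain ⟨i0, hfib⟩ := Finite.exists_infinite_fiber f
    have hinf : {k | f k = i0}.Infinite := Set.infinite_coe_iff.1 hfib
    have hfreq : ∃ᶠ k in atTop, dist (t (g k) v) (t (g k) (Nat.pair l i0.1)) < η l := by
      refine (Nat.frequently_atTop_iff_infinite.2 hinf).mono ?_
      intro k hk
      rw [← hk]; exact hf k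
    refine ⟨i0.1, i0.2, ?_⟩
    by_contra hlt
    have hev := (hconvd v (Nat.pair l i0.1)).eventually (eventually_gt_nhds (not_le.1 hlt))
    obtain ⟨k, h1, h2⟩ := (hfreq.and_eventually hev).exists
    exact absurd h1 (not_lt.2 h2.le)
  -- the limit space
  letI : PseudoMetricSpace TGC.PrePt := TGC.preMS ℓ hℓ0 hℓsymm hℓtri
  set Xinf := UniformSpace.Completion TGC.PrePt with hXinfdef
  set ι : ℕ → Xinf := fun v => ((⟨v⟩ : TGC.PrePt) : Xinf) with hιdef
  have hdistι : ∀ m n, dist (ι m) (ι n) = ℓ m n := by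
    intro m n
    rw [hιdef]
    rw [UniformSpace.Completion.dist_eq]
    rfl
  haveI hXcpt : CompactSpace Xinf := by
    have hTB : TotallyBounded (Set.univ : Set TGC.PrePt) := by
      rw [Metric.totallyBounded_iff]
      intro ε hε
      obtain ⟨l, hl⟩ := exists_nat_one_div_lt hε
      refine ⟨(fun i => (⟨Nat.pair l i⟩ : TGC.PrePt)) '' Set.Iio (M l),
        (Set.finite_Iio _).image _, fun x _ => ?_⟩
      obtain ⟨i, hiM, hi⟩ := NL l x.n
      refine Set.mem_biUnion (Set.mem_image_of_mem _ hiM) (Metric.mem_ball.2 ?_)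
      calc dist x (⟨Nat.pair l i⟩ : TGC.PrePt) = ℓ x.n (Nat.pair l i) := rfl
        _ ≤ η l := hi
        _ < ε := hl
    rw [← isCompact_univ_iff]
    have h1 : TotallyBounded (Set.range ((↑) : TGC.PrePt → Xinf)) := by
      simpa [Set.image_univ] using hTB.image (UniformSpace.Completion.uniformContinuous_coe _)
    have h3 : (Set.univ : Set Xinf) = closure (Set.range ((↑) : TGC.PrePt → Xinf)) :=
      (UniformSpace.Completion.denseRange_coe.closure_eq).symm
    rw [h3]
    exact TotallyBounded.isCompact_of_isClosed h1.closure isClosed_closure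
  haveI hXne : Nonempty Xinf := ⟨ι 0⟩
  -- the limit time function
  have hUC : UniformContinuous (fun x : TGC.PrePt => Lτ x.n) := by
    apply LipschitzWith.uniformContinuous (K := 1)
    intro x y
    rw [edist_dist, edist_dist]
    simp only [ENNReal.coe_one, one_mul]
    apply ENNReal.ofReal_le_ofReal
    rw [Real.dist_eq]
    exact hLτlip x.n y.n
  set τinf : Xinf → ℝ := UniformSpace.Completion.extension (fun x : TGC.PrePt => Lτ x.n)
    with hτinfdef
  have hτcoe : ∀ x : TGC.PrePt, τinf x = Lτ x.n := fun x =>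
    UniformSpace.Completion.extension_coe hUC x
  have hτcont : Continuous τinf := UniformSpace.Completion.continuous_extension
  have hτlipinf : ∀ x y : Xinf, |τinf x - τinf y| ≤ dist x y := by
    intro x y
    refine UniformSpace.Completion.induction_on₂
      (p := fun x y => |τinf x - τinf y| ≤ dist x y) x y ?_ ?_
    · exact isClosed_le ((hτcont.fst'.sub hτcont.snd').abs) continuous_dist
    · intro a b
      rw [hτcoe, hτcoe, UniformSpace.Completion.dist_eq]
      exact hLτlip a.n b.n
  have hτrangeinf : ∀ x : Xinf, τinf x ∈ Set.Icc (0:ℝ) τmax := by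
    intro x
    refine UniformSpace.Completion.induction_on
      (p := fun x => τinf x ∈ Set.Icc (0:ℝ) τmax) x ?_ ?_
    · exact isClosed_Icc.preimage hτcont
    · intro a; rw [hτcoe]; exact hLτmem a.n
  have hdistDinf : ∀ x y : Xinf, dist x y ≤ D := by
    intro x y
    refine UniformSpace.Completion.induction_on₂ (p := fun x y => dist x y ≤ D) x y ?_ ?_
    · exact isClosed_le continuous_dist continuous_const
    · intro a b
      rw [UniformSpace.Completion.dist_eq]
      exact hℓD a.n b.n
  have hdrι : DenseRange ι := by
    have : DenseRange (((↑) : TGC.PrePt → Xinf) ∘ (fun v : ℕ => (⟨v⟩ : TGC.PrePt))) :=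
      DenseRange.comp UniformSpace.Completion.denseRange_coe
        (Function.Surjective.denseRange (fun p => ⟨p.n, rfl⟩))
        (UniformSpace.Completion.continuous_coe _)
    exact this
  have hιdense : ∀ (y : Xinf) (ε : ℝ), 0 < ε → ∃ v, dist y (ι v) < ε := fun y ε hε =>
    Metric.denseRange_iff.1 hdrι y ε hε
  -- uniform control on finite nets, diagonal choice of levels
  set G : ℕ → ℕ → Prop := fun k l =>
    (∀ i i' : Fin (M l), |dist (t (g k) (Nat.pair l i.1)) (t (g k) (Nat.pair l i'.1)) -
        ℓ (Nat.pair l i.1) (Nat.pair l i'.1)| ≤ η l) ∧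
    (∀ i : Fin (M l), |τ (g k) (t (g k) (Nat.pair l i.1)) - Lτ (Nat.pair l i.1)| ≤ η l)
    with hGdef
  have hGev : ∀ l, ∀ᶠ k in atTop, G k l := by
    intro l
    have h1 : ∀ m n : ℕ, ∀ᶠ k in atTop,
        |dist (t (g k) m) (t (g k) n) - ℓ m n| ≤ η l := by
      intro m n
      have h : Tendsto (fun k => |dist (t (g k) m) (t (g k) n) - ℓ m n|) atTop (nhds 0) := by
        simpa using ((hconvd m n).sub_const (ℓ m n)).abs
      exact h.eventually (eventually_le_nhds (hη l))
    have h2 : ∀ n : ℕ, ∀ᶠ k in atTop, |τ (g k) (t (g k) n) - Lτ n| ≤ η l := by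
      intro n
      have h : Tendsto (fun k => |τ (g k) (t (g k) n) - Lτ n|) atTop (nhds 0) := by
        simpa using ((hconvτ n).sub_const (Lτ n)).abs
      exact h.eventually (eventually_le_nhds (hη l))
    exact Filter.Eventually.and
      (Filter.eventually_all.2 fun i => Filter.eventually_all.2 fun i' => h1 _ _)
      (Filter.eventually_all.2 fun i => h2 _)
  have hK0ex : ∀ l, ∃ K0, ∀ k, K0 ≤ k → G k l := fun l => Filter.eventually_atTop.1 (hGev l)
  choose K₀ hK₀ using hK0ex
  set K : ℕ → ℕ := fun l => l + (Finset.range (l+1)).sup K₀ with hKdef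
  have hKK₀ : ∀ l, K₀ l ≤ K l := fun l =>
    le_trans (Finset.le_sup (Finset.self_mem_range_succ l)) (Nat.le_add_left _ _)
  have hKG : ∀ l k, K l ≤ k → G k l := fun l k hk => hK₀ l k (le_trans (hKK₀ l) hk)
  set lk : ℕ → ℕ := fun k => Nat.findGreatest (fun l => K l ≤ k) k with hlkdef
  have hlkG : ∀ k, K 0 ≤ k → G k (lk k) := by
    intro k hk
    exact hKG _ _ (Nat.findGreatest_spec (P := fun l => K l ≤ k) (Nat.zero_le k) hk)
  have hlk_ge : ∀ l, ∀ᶠ k in atTop, l ≤ lk k := by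
    intro l
    filter_upwards [Filter.eventually_ge_atTop (max (K l) l)] with k hk
    exact Nat.le_findGreatest (le_trans (le_max_right _ _) hk)
      (le_trans (le_max_left _ _) hk)
  have hlk_tend : Tendsto lk atTop atTop := Filter.tendsto_atTop.2 hlk_ge
  have hηlk : Tendsto (fun k => η (lk k)) atTop (nhds 0) := by
    have h := (tendsto_one_div_add_atTop_nhds_zero_nat (𝕜 := ℝ)).comp hlk_tend
    simpa [Function.comp_def, hηdef] using h
  -- matched dense sequences
  set P : ∀ k : ℕ, ℕ → Set (X (g k)) := fun k v =>
    {x | ∃ i, i < M (lk k) ∧ dist x (t (g k) (Nat.pair (lk k) i)) ≤ η (lk k) ∧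
      ℓ v (Nat.pair (lk k) i) ≤ 2 * η (lk k)} with hPdef
  have hPne : ∀ k v, (P k v).Nonempty := by
    intro k v
    obtain ⟨i, hiM, hi⟩ := NL (lk k) v
    refine ⟨t (g k) (Nat.pair (lk k) i), i, hiM, ?_, ?_⟩
    · simp [dist_self, (hη _).le]
    · linarith [hη (lk k)]
  have hPcov : ∀ k (x : X (g k)), ∃ v, x ∈ P k v := by
    intro k x
    obtain ⟨i, hiM, hid⟩ := gridnet (lk k) (g k) x
    refine ⟨Nat.pair (lk k) i, i, hiM, hid.le, ?_⟩
    rw [hℓ0]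
    positivity
  have hsel : ∀ k v, ∃ u : ℕ → X (g k), (∀ w, u w ∈ P k v) ∧
      ∀ x ∈ P k v, ∀ ε : ℝ, 0 < ε → ∃ w, dist x (u w) < ε := by
    intro k v
    haveI : TopologicalSpace.SeparableSpace (X (g k)) :=
      TopologicalSpace.isSeparable_univ_iff.1 isCompact_univ.isSeparable
    haveI : SecondCountableTopology (X (g k)) := UniformSpace.secondCountable_of_separable _
    haveI : Nonempty ↥(P k v) := (hPne k v).to_subtype
    obtain ⟨u0, hu0⟩ := TopologicalSpace.exists_dense_seq ↥(P k v)
    refine ⟨fun w => (u0 w : X (g k)), fun w => (u0 w).2, fun x hx ε hε => ?_⟩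
    obtain ⟨w, hw⟩ := Metric.denseRange_iff.1 hu0 ⟨x, hx⟩ ε hε
    exact ⟨w, by simpa [Subtype.dist_eq] using hw⟩
  choose u hu1 hu2 using hsel
  set s : ∀ k : ℕ, ℕ → X (g k) := fun k p => u k p.unpair.1 p.unpair.2 with hsdef
  have hsmem : ∀ k p, s k p ∈ P k p.unpair.1 := fun k p => hu1 k _ _
  have hsdense : ∀ k, DenseRange (s k) := by
    intro k
    rw [Metric.denseRange_iff]
    intro x ε hε
    obtain ⟨v, hv⟩ := hPcov k x
    obtain ⟨w, hw⟩ := hu2 k v x hv ε hε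
    refine ⟨Nat.pair v w, ?_⟩
    simpa [hsdef, Nat.unpair_pair] using hw
  set sinf : ℕ → Xinf := fun p => ι p.unpair.1 with hsinfdef
  have hsinfdense : DenseRange sinf := by
    have hcι : Continuous ι := by
      have hcomp : Continuous (((↑) : TGC.PrePt → Xinf) ∘ fun v : ℕ => (⟨v⟩ : TGC.PrePt)) :=
        Continuous.comp (UniformSpace.Completion.continuous_coe _)
          continuous_of_discreteTopology
      exact hcomp
    have hsurj : Function.Surjective (fun p : ℕ => p.unpair.1) := fun v =>
      ⟨Nat.pair v 0, by simp⟩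
    have h : DenseRange (ι ∘ (fun p : ℕ => p.unpair.1)) :=
      DenseRange.comp hdrι hsurj.denseRange hcι
    exact h
  -- the embeddings
  have hmemk : ∀ k (x : X (g k)), Memℓp (TGC.timedCoords (τ (g k)) (s k) x) ⊤ := by
    intro k x
    refine TGC.memℓp_timedCoords _ _ _ B₀ ?_ ?_
    · rw [abs_of_nonneg (hτrange _ _).1]
      exact le_trans (hτrange _ _).2 (le_max_left _ _)
    · exact fun m => le_trans (hdistD _ _ _) (le_max_right _ _)
  have hmeminf : ∀ x : Xinf, Memℓp (TGC.timedCoords τinf sinf x) ⊤ := by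
    intro x
    refine TGC.memℓp_timedCoords _ _ _ B₀ ?_ ?_
    · rw [abs_of_nonneg (hτrangeinf x).1]
      exact le_trans (hτrangeinf x).2 (le_max_left _ _)
    · exact fun m => le_trans (hdistDinf _ _) (le_max_right _ _)
  set φ : ∀ k, X (g k) → lp (fun _ : ℕ => ℝ) ⊤ :=
    fun k => TGC.frechetMap (τ (g k)) (s k) (hmemk k) with hφdef
  set φinf : Xinf → lp (fun _ : ℕ => ℝ) ⊤ := TGC.frechetMap τinf sinf hmeminf with hφinfdef
  have hφiso : ∀ k, Isometry (φ k) := fun k =>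
    TGC.isometry_frechetMap _ _ _ (hsdense k) (hτlip (g k))
  have hφinfiso : Isometry φinf :=
    TGC.isometry_frechetMap _ _ _ hsinfdense hτlipinf
  -- main approximation estimates
  have HA : ∀ k, K 0 ≤ k → ∀ x : X (g k), ∃ y : Xinf,
      dist (φ k x) (φinf y) ≤ 6 * η (lk k) := by
    intro k hk x
    obtain ⟨hG1, hG2⟩ := hlkG k hk
    obtain ⟨i, hiM, hxd⟩ := gridnet (lk k) (g k) x
    refine ⟨ι (Nat.pair (lk k) i), ?_⟩
    have hη0 : (0:ℝ) ≤ η (lk k) := (hη _).le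
    refine TGC.frechetMap_dist_le _ _ _ _ _ _ _ _ (by linarith) ?_ ?_
    · have e1 : |τ (g k) x - τ (g k) (t (g k) (Nat.pair (lk k) i))|
          ≤ dist x (t (g k) (Nat.pair (lk k) i)) := hτlip _ _ _
      have e2 : |τ (g k) (t (g k) (Nat.pair (lk k) i)) - Lτ (Nat.pair (lk k) i)| ≤ η (lk k) :=
        hG2 ⟨i, hiM⟩
      have e3 : τinf (ι (Nat.pair (lk k) i)) = Lτ (Nat.pair (lk k) i) := hτcoe _
      rw [e3]
      obtain ⟨e1a, e1b⟩ := abs_sub_le_iff.1 e1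
      obtain ⟨e2a, e2b⟩ := abs_sub_le_iff.1 e2
      rw [abs_sub_le_iff]
      constructor <;> linarith
    · intro m
      obtain ⟨i', hi'M, h1, h2⟩ := hsmem k m
      have hsinfm : dist (sinf m) (ι (Nat.pair (lk k) i)) = ℓ m.unpair.1 (Nat.pair (lk k) i) := by
        rw [hsinfdef]; exact hdistι _ _
      have e1 : |dist (s k m) x - dist (t (g k) (Nat.pair (lk k) i')) x|
          ≤ dist (s k m) (t (g k) (Nat.pair (lk k) i')) := abs_dist_sub_le _ _ _
      have e2 : |dist (t (g k) (Nat.pair (lk k) i')) x -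
          dist (t (g k) (Nat.pair (lk k) i')) (t (g k) (Nat.pair (lk k) i))|
          ≤ dist x (t (g k) (Nat.pair (lk k) i)) := by
        simpa [dist_comm] using
          abs_dist_sub_le x (t (g k) (Nat.pair (lk k) i)) (t (g k) (Nat.pair (lk k) i'))
      have e3 : |dist (t (g k) (Nat.pair (lk k) i')) (t (g k) (Nat.pair (lk k) i)) -
          ℓ (Nat.pair (lk k) i') (Nat.pair (lk k) i)| ≤ η (lk k) := hG1 ⟨i', hi'M⟩ ⟨i, hiM⟩
      have e4 : |ℓ (Nat.pair (lk k) i') (Nat.pair (lk k) i) -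
          ℓ m.unpair.1 (Nat.pair (lk k) i)| ≤ ℓ m.unpair.1 (Nat.pair (lk k) i') := by
        have := hℓabs (Nat.pair (lk k) i') m.unpair.1 (Nat.pair (lk k) i)
        rwa [← hℓsymm m.unpair.1 (Nat.pair (lk k) i')] at this
      rw [hsinfm]
      obtain ⟨e1a, e1b⟩ := abs_sub_le_iff.1 e1
      obtain ⟨e2a, e2b⟩ := abs_sub_le_iff.1 e2
      obtain ⟨e3a, e3b⟩ := abs_sub_le_iff.1 e3
      obtain ⟨e4a, e4b⟩ := abs_sub_le_iff.1 e4
      rw [abs_sub_le_iff]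
      constructor <;> linarith
  have HB : ∀ k, K 0 ≤ k → ∀ y : Xinf, ∃ x : X (g k),
      dist (φ k x) (φinf y) ≤ 6 * η (lk k) := by
    intro k hk y
    obtain ⟨hG1, hG2⟩ := hlkG k hk
    have hη0 : (0:ℝ) ≤ η (lk k) := (hη _).le
    obtain ⟨v0, hv0⟩ := hιdense y (η (lk k)) (hη _)
    obtain ⟨i, hiM, hvi⟩ := NL (lk k) v0
    have hyn : dist y (ι (Nat.pair (lk k) i)) ≤ 2 * η (lk k) := by
      have hd : dist (ι v0) (ι (Nat.pair (lk k) i)) = ℓ v0 (Nat.pair (lk k) i) := hdistι _ _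
      calc dist y (ι (Nat.pair (lk k) i))
          ≤ dist y (ι v0) + dist (ι v0) (ι (Nat.pair (lk k) i)) := dist_triangle _ _ _
        _ ≤ η (lk k) + η (lk k) := by rw [hd]; exact add_le_add hv0.le hvi
        _ = 2 * η (lk k) := by ring
    refine ⟨t (g k) (Nat.pair (lk k) i), ?_⟩
    refine TGC.frechetMap_dist_le _ _ _ _ _ _ _ _ (by linarith) ?_ ?_
    · have e2 : |τ (g k) (t (g k) (Nat.pair (lk k) i)) - Lτ (Nat.pair (lk k) i)| ≤ η (lk k) :=
        hG2 ⟨i, hiM⟩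
      have e3 : |τinf (ι (Nat.pair (lk k) i)) - τinf y| ≤ dist (ι (Nat.pair (lk k) i)) y :=
        hτlipinf _ _
      have e4 : τinf (ι (Nat.pair (lk k) i)) = Lτ (Nat.pair (lk k) i) := hτcoe _
      have e5 : dist (ι (Nat.pair (lk k) i)) y ≤ 2 * η (lk k) := by
        rw [dist_comm]; exact hyn
      rw [e4] at e3
      obtain ⟨e2a, e2b⟩ := abs_sub_le_iff.1 e2
      obtain ⟨e3a, e3b⟩ := abs_sub_le_iff.1 e3
      rw [abs_sub_le_iff]
      constructor <;> linarith
    · intro m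
      obtain ⟨i', hi'M, h1, h2⟩ := hsmem k m
      have hsinfm : dist (sinf m) (ι (Nat.pair (lk k) i)) = ℓ m.unpair.1 (Nat.pair (lk k) i) := by
        rw [hsinfdef]; exact hdistι _ _
      have e1 : |dist (s k m) (t (g k) (Nat.pair (lk k) i)) -
          dist (t (g k) (Nat.pair (lk k) i')) (t (g k) (Nat.pair (lk k) i))|
          ≤ dist (s k m) (t (g k) (Nat.pair (lk k) i')) := abs_dist_sub_le _ _ _
      have e3 : |dist (t (g k) (Nat.pair (lk k) i')) (t (g k) (Nat.pair (lk k) i)) -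
          ℓ (Nat.pair (lk k) i') (Nat.pair (lk k) i)| ≤ η (lk k) := hG1 ⟨i', hi'M⟩ ⟨i, hiM⟩
      have e4 : |ℓ (Nat.pair (lk k) i') (Nat.pair (lk k) i) -
          ℓ m.unpair.1 (Nat.pair (lk k) i)| ≤ ℓ m.unpair.1 (Nat.pair (lk k) i') := by
        have := hℓabs (Nat.pair (lk k) i') m.unpair.1 (Nat.pair (lk k) i)
        rwa [← hℓsymm m.unpair.1 (Nat.pair (lk k) i')] at this
      have e5 : |dist (sinf m) (ι (Nat.pair (lk k) i)) - dist (sinf m) y|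
          ≤ dist (ι (Nat.pair (lk k) i)) y := by
        have h := abs_dist_sub_le (ι (Nat.pair (lk k) i)) y (sinf m)
        rw [dist_comm (ι (Nat.pair (lk k) i)) (sinf m), dist_comm y (sinf m)] at h
        exact h
      have e6 : dist (ι (Nat.pair (lk k) i)) y ≤ 2 * η (lk k) := by
        exact (dist_comm _ _).trans_le hyn
      rw [hsinfm] at e5
      obtain ⟨e1a, e1b⟩ := abs_sub_le_iff.1 e1
      obtain ⟨e3a, e3b⟩ := abs_sub_le_iff.1 e3
      obtain ⟨e4a, e4b⟩ := abs_sub_le_iff.1 e4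
      obtain ⟨e5a, e5b⟩ := abs_sub_le_iff.1 e5
      rw [abs_sub_le_iff]
      constructor <;> linarith
  -- Hausdorff convergence
  have hHD : ∀ k, K 0 ≤ k →
      Metric.hausdorffDist (Set.range (φ k)) (Set.range φinf) ≤ 6 * η (lk k) := by
    intro k hk
    have hη0 : (0:ℝ) ≤ η (lk k) := (hη _).le
    refine Metric.hausdorffDist_le_of_mem_dist (by linarith) ?_ ?_
    · rintro _ ⟨x, rfl⟩
      obtain ⟨y, hy⟩ := HA k hk x
      exact ⟨φinf y, Set.mem_range_self _, hy⟩
    · rintro _ ⟨y, rfl⟩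
      obtain ⟨x, hx⟩ := HB k hk y
      exact ⟨φ k x, Set.mem_range_self _, by rwa [dist_comm] at hx⟩
  have h6η : Tendsto (fun k => 6 * η (lk k)) atTop (nhds 0) := by
    simpa using hηlk.const_mul 6
  have hHDtend : Tendsto
      (fun k => Metric.hausdorffDist (Set.range (φ k)) (Set.range φinf)) atTop (nhds 0) := by
    refine squeeze_zero' (Filter.Eventually.of_forall fun k => Metric.hausdorffDist_nonneg)
      ?_ h6η
    filter_upwards [Filter.eventually_ge_atTop (K 0)] with k hk
    exact hHD k hk
  -- the compact container
  haveI : Fact ((1:ENNReal) ≤ ⊤) := ⟨le_top⟩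
  set U : Set (lp (fun _ : ℕ => ℝ) ⊤) := Set.range φinf ∪ ⋃ k, Set.range (φ k) with hUdef
  have hcompinf : IsCompact (Set.range φinf) := isCompact_range hφinfiso.continuous
  have hcompran : ∀ k, IsCompact (Set.range (φ k)) := fun k =>
    isCompact_range (hφiso k).continuous
  have hUtb : TotallyBounded U := by
    rw [Metric.totallyBounded_iff]
    intro ε hε
    obtain ⟨K1, hK1⟩ := Filter.eventually_atTop.1
      (h6η.eventually (eventually_lt_nhds (half_pos hε)))
    set K2 := max K1 (K 0) with hK2def
    set Cset : Set (lp (fun _ : ℕ => ℝ) ⊤) :=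
      Set.range φinf ∪ ⋃ k ∈ Finset.range K2, Set.range (φ k) with hCsetdef
    have hCcpt : IsCompact Cset := by
      refine hcompinf.union ?_
      refine (Finset.range K2).finite_toSet.isCompact_biUnion ?_
      exact fun k _ => hcompran k
    obtain ⟨T, hTfin, hTcov⟩ := Metric.totallyBounded_iff.1 hCcpt.totallyBounded
      (ε/2) (half_pos hε)
    refine ⟨T, hTfin, ?_⟩
    intro p hp
    have hnear : ∃ q ∈ Cset, dist p q ≤ ε/2 := by
      rcases hp with hp | hp
      · exact ⟨p, Or.inl hp, by rw [dist_self]; positivity⟩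
      · obtain ⟨Sk, ⟨k, rfl⟩, hpk⟩ := hp
        by_cases hkK : k < K2
        · refine ⟨p, Or.inr ?_, by rw [dist_self]; positivity⟩
          exact Set.mem_biUnion (Finset.mem_coe.2 (Finset.mem_range.2 hkK)) hpk
        · obtain ⟨x, rfl⟩ := hpk
          have hkK1 : K1 ≤ k := le_trans (le_max_left _ _) (not_lt.1 hkK)
          have hkK0 : K 0 ≤ k := le_trans (le_max_right _ _) (not_lt.1 hkK)
          obtain ⟨y, hy⟩ := HA k hkK0 x
          refine ⟨φinf y, Or.inl (Set.mem_range_self _), ?_⟩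
          exact le_trans hy (hK1 k hkK1).le
    obtain ⟨q, hq, hpq⟩ := hnear
    obtain ⟨z, hzT, hqz⟩ := Set.mem_iUnion₂.1 (hTcov hq)
    refine Set.mem_biUnion hzT (Metric.mem_ball.2 ?_)
    have hqz' : dist q z < ε/2 := Metric.mem_ball.1 hqz
    calc dist p z ≤ dist p q + dist q z := dist_triangle _ _ _
      _ < ε/2 + ε/2 := by exact add_lt_add_of_le_of_lt hpq hqz'
      _ = ε := by ring
  set Z : Set (lp (fun _ : ℕ => ℝ) ⊤) := closure U with hZdef
  have hZcpt : IsCompact Z := TotallyBounded.isCompact_of_isClosed hUtb.closure isClosed_closure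
  have hZk : ∀ k, Set.range (φ k) ⊆ Z := fun k =>
    le_trans (le_trans (Set.subset_iUnion (fun k => Set.range (φ k)) k)
      Set.subset_union_right) subset_closure
  have hZinf : Set.range φinf ⊆ Z := le_trans Set.subset_union_left subset_closure
  -- assembling everything
  refine ⟨g, hg, Xinf, inferInstance, hXcpt, hXne, τinf, hτrangeinf, hτlipinf,
    Z, hZcpt, φ, φinf, ?_, ?_, hφiso, hφinfiso, hZk, hZinf, hHDtend⟩
  · intro k
    exact ⟨s k, hsdense k, fun x => ⟨rfl, fun nn => rfl⟩⟩
  · exact ⟨sinf, hsinfdense, fun x => ⟨rfl, fun nn => rfl⟩⟩
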